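/- arXiv:2308.05435 — 3 statements merged into one kernel-verified Lean document; each statement's English description precedes it below -/
import Mathlib

section
/- Let p ∈ (0,1) and let r_p : [0,1] → [0,1] be the unique continuous decreasing function satisfying x^p (1−x)^{1−p} = r_p(x)^p (1−r_p(x))^{1−p} for x ∈ (0,1). Then r_p is differentiable on (0,1) and satisfies the differential equation (p − r_p(x))·x·(1−x)·r_p'(x) = (p − x)·r_p(x)·(1 − r_p(x)) for all x ∈ (0,1). -/
open Set Filter Real
open scoped Topology

noncomputable def auxG (p : ℝ) : ℝ → ℝ := fun x => p * Real.log x + (1 - p) * Real.log (1 - x)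

noncomputable def auxg (p : ℝ) : ℝ → ℝ := fun x => (p - x) / (x * (1 - x))

lemma auxG_deriv {p x : ℝ} (hx : x ∈ Set.Ioo (0:ℝ) 1) :
    HasStrictDerivAt (auxG p) (auxg p x) x := by
  obtain ⟨hx0, hx1⟩ := hx
  have h1 : (1:ℝ) - x ≠ 0 := by linarith
  have hlog1 : HasStrictDerivAt (fun y : ℝ => Real.log y) x⁻¹ x := Real.hasStrictDerivAt_log (ne_of_gt hx0)
  have hsub : HasStrictDerivAt (fun y : ℝ => 1 - y) (-1) x := by
    exact (hasStrictDerivAt_id x).const_sub 1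
  have hlog2 : HasStrictDerivAt (fun y : ℝ => Real.log (1 - y)) ((1 - x)⁻¹ * (-1)) x :=
    (Real.hasStrictDerivAt_log h1).comp x hsub
  have := ((hlog1.const_mul p).add (hlog2.const_mul (1 - p)))
  refine this.congr_deriv ?_
  simp only [auxg]
  field_simp
  ring

lemma auxG_log {p x : ℝ} (hx : x ∈ Set.Ioo (0:ℝ) 1) :
    auxG p x = Real.log (x ^ p * (1 - x) ^ (1 - p)) := by
  obtain ⟨hx0, hx1⟩ := hx
  have h1 : (0:ℝ) < 1 - x := by linarith
  rw [Real.log_mul (by positivity) (by positivity), Real.log_rpow hx0, Real.log_rpow h1, auxG]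

lemma auxG_max {p : ℝ} (hp : p ∈ Set.Ioo (0:ℝ) 1) :
    ∀ y ∈ Set.Ioo (0:ℝ) 1, y ≠ p → auxG p y < auxG p p := by
  obtain ⟨hp0, hp1⟩ := hp
  intro y hy hyp
  obtain ⟨hy0, hy1⟩ := hy
  have hderiv : ∀ z ∈ Set.Ioo (0:ℝ) 1, deriv (auxG p) z = auxg p z :=
    fun z hz => (auxG_deriv hz).hasDerivAt.deriv
  have hcont : ∀ s ⊆ Set.Ioo (0:ℝ) 1, ContinuousOn (auxG p) s := fun s hs z hz =>
    ((auxG_deriv (hs hz)).hasDerivAt.continuousAt).continuousWithinAt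
  rcases lt_or_gt_of_ne hyp with h | h
  · have hmono : StrictMonoOn (auxG p) (Set.Icc y p) := by
      apply strictMonoOn_of_deriv_pos (convex_Icc y p)
      · exact hcont _ (fun z hz => ⟨lt_of_lt_of_le hy0 hz.1, lt_of_le_of_lt hz.2 hp1⟩)
      · intro z hz
        rw [interior_Icc] at hz
        have hz0 : 0 < z := lt_trans hy0 hz.1
        have hz1 : z < 1 := lt_trans hz.2 hp1
        rw [hderiv z ⟨hz0, hz1⟩]
        have : 0 < p - z := by linarith [hz.2]
        have : 0 < z * (1 - z) := by nlinarith
        exact div_pos (by linarith [hz.2]) this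
    exact hmono ⟨le_refl y, le_of_lt h⟩ ⟨le_of_lt h, le_refl p⟩ h
  · have hanti : StrictAntiOn (auxG p) (Set.Icc p y) := by
      apply strictAntiOn_of_deriv_neg (convex_Icc p y)
      · exact hcont _ (fun z hz => ⟨lt_of_lt_of_le hp0 hz.1, lt_of_le_of_lt hz.2 hy1⟩)
      · intro z hz
        rw [interior_Icc] at hz
        have hz0 : 0 < z := lt_trans hp0 hz.1
        have hz1 : z < 1 := lt_trans hz.2 hy1
        rw [hderiv z ⟨hz0, hz1⟩]
        apply div_neg_of_neg_of_pos
        · linarith [hz.1]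
        · nlinarith
    exact hanti ⟨le_refl p, le_of_lt h⟩ ⟨le_of_lt h, le_refl y⟩ h


/-- Let `p ∈ (0,1)` and let `r_p : [0,1] → [0,1]` be the (unique) continuous strictly
decreasing function with `x^p (1-x)^{1-p} = r_p(x)^p (1-r_p(x))^{1-p}` on `(0,1)`.
Then `r_p` is differentiable on `(0,1)` and satisfies
`(p - r_p(x))·x·(1-x)·r_p'(x) = (p - x)·r_p(x)·(1 - r_p(x))` there. -/
theorem stmt17 (p : ℝ) (hp : p ∈ Set.Ioo (0 : ℝ) 1) (r : ℝ → ℝ)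
    (hcont : ContinuousOn r (Set.Icc 0 1)) (hanti : StrictAntiOn r (Set.Icc 0 1))
    (hmaps : Set.MapsTo r (Set.Icc 0 1) (Set.Icc 0 1))
    (heq : ∀ x ∈ Set.Ioo (0 : ℝ) 1,
      x ^ p * (1 - x) ^ (1 - p) = r x ^ p * (1 - r x) ^ (1 - p)) :
    ∀ x ∈ Set.Ioo (0 : ℝ) 1, DifferentiableAt ℝ r x ∧
      (p - r x) * x * (1 - x) * deriv r x = (p - x) * r x * (1 - r x) := by
  obtain ⟨hp0, hp1⟩ := hp
  have hIoo : Set.Ioo (0:ℝ) 1 ⊆ Set.Icc 0 1 := Set.Ioo_subset_Icc_self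
  have hrmem : ∀ x ∈ Set.Ioo (0:ℝ) 1, r x ∈ Set.Ioo (0:ℝ) 1 := by
    intro x hx
    obtain ⟨hx0, hx1⟩ := hx
    have h0 : r x < r 0 := hanti (by simp) ⟨le_of_lt hx0, le_of_lt hx1⟩ hx0
    have h1 : r 1 < r x := hanti ⟨le_of_lt hx0, le_of_lt hx1⟩ (by simp) hx1
    have hr0 : r 0 ≤ 1 := (hmaps (by simp)).2
    have hr1 : 0 ≤ r 1 := (hmaps (by simp)).1
    exact ⟨lt_of_le_of_lt hr1 h1, lt_of_lt_of_le h0 hr0⟩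
  have hGr : ∀ x ∈ Set.Ioo (0:ℝ) 1, auxG p (r x) = auxG p x := by
    intro x hx
    rw [auxG_log (hrmem x hx), auxG_log hx, heq x hx]
  have hcontAt : ∀ x ∈ Set.Ioo (0:ℝ) 1, ContinuousAt r x := by
    intro x hx
    exact hcont.continuousAt (Icc_mem_nhds hx.1 hx.2)
  have hpmem' : p ∈ Set.Ioo (0:ℝ) 1 := ⟨hp0, hp1⟩
  have hrp : r p = p := by
    by_contra h
    have := auxG_max hpmem' (r p) (hrmem p hpmem') h
    rw [hGr p hpmem'] at this
    exact lt_irrefl _ this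
  have hrne : ∀ x ∈ Set.Ioo (0:ℝ) 1, x ≠ p → r x ≠ p := by
    intro x hx hxp hc
    exact hxp (hanti.injOn (hIoo hx) (hIoo hpmem') (by rw [hc, hrp]))
  have hside1 : ∀ x ∈ Set.Ioo (0:ℝ) 1, x < p → p < r x := by
    intro x hx h
    have := hanti (hIoo hx) (hIoo hpmem') h
    rwa [hrp] at this
  have hside2 : ∀ x ∈ Set.Ioo (0:ℝ) 1, p < x → r x < p := by
    intro x hx h
    have := hanti (hIoo hpmem') (hIoo hx) h
    rwa [hrp] at this
  have hgne : ∀ x ∈ Set.Ioo (0:ℝ) 1, x ≠ p → auxg p x ≠ 0 := by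
    intro x hx hxp
    have h1 : p - x ≠ 0 := sub_ne_zero.2 (Ne.symm hxp)
    have h2 : x * (1 - x) ≠ 0 := by
      have : 0 < x * (1 - x) := by nlinarith [hx.1, hx.2]
      exact ne_of_gt this
    exact div_ne_zero h1 h2
  have hmain : ∀ x ∈ Set.Ioo (0:ℝ) 1, ∃ d : ℝ, HasDerivAt r d x ∧
      (p - r x) * x * (1 - x) * d = (p - x) * r x * (1 - r x) := by
    intro x hx
    by_cases hxp : x = p
    · rw [hxp] at hx
      refine ⟨-1, ?_, by rw [hxp, hrp]; ring⟩
      rw [hxp]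
      have hcontAtp : ContinuousAt r p := hcontAt p hx
      have hpmem : p ∈ Set.Ioo (0:ℝ) 1 := ⟨hp0, hp1⟩
      have hvp : p * (1 - p) ≠ 0 := ne_of_gt (by nlinarith)
      set c₀ : ℝ := -(1 / (p * (1 - p))) with hc₀
      -- derivative of auxg at p
      have hgd : HasDerivAt (auxg p) c₀ p := by
        have hu : HasDerivAt (fun x : ℝ => p - x) (-1) p := by
          exact (hasDerivAt_id' p).const_sub p
        have hv : HasDerivAt (fun x : ℝ => x * (1 - x)) (1 - 2 * p) p := by
          have h : HasDerivAt (fun x : ℝ => x - x ^ 2) (1 - 2 * p) p := by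
            refine ((hasDerivAt_id' p).sub (hasDerivAt_pow 2 p)).congr_deriv ?_
            norm_num
          convert h using 2 with y
          ring
        have := hu.div hv hvp
        refine this.congr_deriv ?_
        symm
        rw [hc₀, eq_div_iff (pow_ne_zero 2 hvp)]
        field_simp
        ring
      have hgpp : auxg p p = 0 := by simp [auxg]
      set c : ℝ := c₀ / 2 with hc
      have hcne : c ≠ 0 := by
        have h1 : (0:ℝ) < 1 / (p * (1 - p)) := by
          have : (0:ℝ) < p * (1 - p) := by nlinarith
          positivity
        rw [hc, hc₀]
        intro h
        rw [div_eq_zero_iff] at h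
        rcases h with h | h
        · linarith
        · norm_num at h
      set Q : ℝ → ℝ := fun y => (auxG p y - auxG p p) / (y - p) ^ 2 with hQdef
      have hIooEv : ∀ᶠ y in 𝓝[≠] p, y ∈ Set.Ioo (0:ℝ) 1 :=
        mem_nhdsWithin_of_mem_nhds (isOpen_Ioo.mem_nhds hpmem)
      have hneEv : ∀ᶠ y in 𝓝[≠] p, y ≠ p := self_mem_nhdsWithin
      -- L'Hopital
      have hQ : Tendsto Q (𝓝[≠] p) (𝓝 c) := by
        apply HasDerivAt.lhopital_zero_nhdsNE (f' := auxg p) (g' := fun y => 2 * (y - p))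
        · filter_upwards [hIooEv] with y hy
          exact ((auxG_deriv hy).hasDerivAt).sub_const _
        · filter_upwards with y
          have h := ((hasDerivAt_id y).sub_const p).pow 2
          refine h.congr_deriv ?_
          simp
        · filter_upwards [hneEv] with y hy
          exact mul_ne_zero two_ne_zero (sub_ne_zero.2 hy)
        · have hGc : ContinuousAt (auxG p) p := (auxG_deriv hpmem).hasDerivAt.continuousAt
          have h : Tendsto (auxG p) (𝓝[≠] p) (𝓝 (auxG p p)) :=
            hGc.tendsto.mono_left nhdsWithin_le_nhds
          simpa using h.sub_const (auxG p p)
        · have h : Tendsto (fun y : ℝ => (y - p) ^ 2) (𝓝 p) (𝓝 ((p - p) ^ 2)) :=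
            ((continuous_id.sub continuous_const).pow 2).tendsto p
          simpa using h.mono_left (nhdsWithin_le_nhds (s := {p}ᶜ))
        · have hslope := (hasDerivAt_iff_tendsto_slope.1 hgd).div_const 2
          refine hslope.congr fun y => ?_
          rw [slope_def_field, hgpp, sub_zero, div_div, mul_comm]
      -- r tends into punctured nbhd
      have hrt : Tendsto r (𝓝[≠] p) (𝓝[≠] p) := by
        rw [tendsto_nhdsWithin_iff]
        constructor
        · have := hcontAtp.tendsto.mono_left (nhdsWithin_le_nhds (s := {p}ᶜ))
          rwa [hrp] at this
        · filter_upwards [hIooEv, hneEv] with y hy hyp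
          exact hrne y hy hyp
      have hQr : Tendsto (fun y => Q (r y)) (𝓝[≠] p) (𝓝 c) := hQ.comp hrt
      have hRatio : Tendsto (fun y => Q y / Q (r y)) (𝓝[≠] p) (𝓝 1) := by
        have := hQ.div hQr hcne
        rwa [div_self hcne] at this
      have hS : Tendsto (fun y => -Real.sqrt (Q y / Q (r y))) (𝓝[≠] p) (𝓝 (-1)) := by
        have h := (Real.continuous_sqrt.tendsto 1).comp hRatio
        rw [Real.sqrt_one] at h
        exact h.neg
      have hcong : ∀ᶠ y in 𝓝[≠] p, -Real.sqrt (Q y / Q (r y)) = slope r p y := by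
        filter_upwards [hIooEv, hneEv] with y hy hyp
        have hry : r y ∈ Set.Ioo (0:ℝ) 1 := hrmem y hy
        have hryp : r y ≠ p := hrne y hy hyp
        have hA : auxG p y - auxG p p ≠ 0 :=
          ne_of_lt (sub_neg.2 (auxG_max hpmem y hy hyp))
        have hu : (y - p) ≠ 0 := sub_ne_zero.2 hyp
        have hv : (r y - p) ≠ 0 := sub_ne_zero.2 hryp
        have hQQ : Q y / Q (r y) = ((r y - p) / (y - p)) ^ 2 := by
          have h1 : Q (r y) = (auxG p y - auxG p p) / (r y - p) ^ 2 := by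
            simp only [hQdef, hGr y hy]
          have h2 : Q y = (auxG p y - auxG p p) / (y - p) ^ 2 := rfl
          rw [h1, h2, div_pow]
          field_simp
        have hS0 : (r y - p) / (y - p) ≤ 0 := by
          rcases lt_or_gt_of_ne hyp with h | h
          · apply div_nonpos_of_nonneg_of_nonpos
            · linarith [hside1 y hy h]
            · linarith
          · apply div_nonpos_of_nonpos_of_nonneg
            · linarith [hside2 y hy h]
            · linarith
        rw [hQQ, Real.sqrt_sq_eq_abs, abs_of_nonpos hS0, neg_neg, slope_def_field, hrp]
      have hfinal : Tendsto (slope r p) (𝓝[≠] p) (𝓝 (-1)) :=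
        hS.congr' (by filter_upwards [hcong] with y h using h)
      exact hasDerivAt_iff_tendsto_slope.2 hfinal
    · have hb : r x ∈ Set.Ioo (0:ℝ) 1 := hrmem x hx
      have hbne : r x ≠ p := hrne x hx hxp
      have hcontAtx : ContinuousAt r x := hcontAt x hx
      set b := r x with hbdef
      have hGb : HasStrictDerivAt (auxG p) (auxg p b) b := auxG_deriv hb
      have hgb : auxg p b ≠ 0 := hgne b hb hbne
      set φ := hGb.localInverse (auxG p) (auxg p b) b hgb with hφdef
      have hφ : HasStrictDerivAt φ (auxg p b)⁻¹ (auxG p b) := hGb.to_localInverse hgb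
      have hGx : HasStrictDerivAt (auxG p) (auxg p x) x := auxG_deriv hx
      have hGbx : auxG p b = auxG p x := hGr x hx
      rw [hGbx] at hφ
      have hcomp : HasDerivAt (φ ∘ auxG p) ((auxg p b)⁻¹ * auxg p x) x :=
        (hφ.comp x hGx).hasDerivAt
      have h1 : ∀ᶠ w in 𝓝 b, φ (auxG p w) = w :=
        (hGb.hasStrictFDerivAt_equiv hgb).eventually_left_inverse
      have h2 : ∀ᶠ y in 𝓝 x, φ (auxG p (r y)) = r y := hcontAtx.eventually h1
      have h3 : ∀ᶠ y in 𝓝 x, auxG p (r y) = auxG p y := by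
        filter_upwards [isOpen_Ioo.mem_nhds hx] with y hy using hGr y hy
      have heq' : r =ᶠ[𝓝 x] φ ∘ auxG p := by
        filter_upwards [h2, h3] with y h2y h3y
        simp only [Function.comp_apply, ← h3y, h2y]
      have hr' : HasDerivAt r ((auxg p b)⁻¹ * auxg p x) x := hcomp.congr_of_eventuallyEq heq'
      refine ⟨_, hr', ?_⟩
      have hbx0 : (0:ℝ) < x := hx.1
      have hbx1 : x < 1 := hx.2
      have hb0 : (0:ℝ) < b := hb.1
      have hb1 : b < 1 := hb.2
      have hpb : p - b ≠ 0 := sub_ne_zero.2 (Ne.symm hbne)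
      have hx0' : x ≠ 0 := ne_of_gt hbx0
      have h1x : (1:ℝ) - x ≠ 0 := by linarith
      have hb0' : b ≠ 0 := ne_of_gt hb0
      have h1b : (1:ℝ) - b ≠ 0 := by linarith
      rw [auxg, auxg, inv_div]
      field_simp
  intro x hx
  obtain ⟨d, hd, hode⟩ := hmain x hx
  exact ⟨hd.differentiableAt, by rw [hd.deriv]; exact hode⟩
end

section
/- Let p ∈ (0,1) and let r_p : [0,1] → [0,1] be the unique continuous decreasing function satisfying x^p (1−x)^{1−p} = r_p(x)^p (1−r_p(x))^{1−p} for x ∈ (0,1). If p ≤ 1/2 then r_p is convex on [0,1], and if p ≥ 1/2 then r_p is concave on [0,1]. -/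
open Set Real

noncomputable def phiF (p : ℝ) : ℝ → ℝ := fun x => x ^ p * (1 - x) ^ (1 - p)

lemma phi_cont {p : ℝ} (hp : p ∈ Set.Ioo (0:ℝ) 1) : ContinuousOn (phiF p) (Icc 0 1) := by
  intro x hx
  apply ContinuousWithinAt.mul
  · apply ContinuousAt.continuousWithinAt
    exact Real.continuousAt_rpow_const x p (Or.inr hp.1.le)
  · have : ContinuousAt (fun x : ℝ => (1 - x) ^ (1 - p)) x := by
      have h1 : ContinuousAt (fun x : ℝ => 1 - x) x := by fun_prop
      have h2 : ContinuousAt (fun y : ℝ => y ^ (1 - p)) (1 - x) :=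
        Real.continuousAt_rpow_const _ _ (Or.inr (by linarith [hp.2]))
      exact h2.comp h1
    exact this.continuousWithinAt

lemma phi_hasDeriv {p : ℝ} (hp : p ∈ Set.Ioo (0:ℝ) 1) {x : ℝ} (hx : x ∈ Ioo (0:ℝ) 1) :
    HasDerivAt (phiF p) (x ^ (p-1) * (1-x) ^ (-p) * (p - x)) x := by
  have hx0 : (0:ℝ) < x := hx.1
  have hx1 : (0:ℝ) < 1 - x := by linarith [hx.2]
  have h1 : HasDerivAt (fun x : ℝ => x ^ p) (p * x ^ (p-1)) x :=
    Real.hasDerivAt_rpow_const (Or.inl hx0.ne')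
  have h2 : HasDerivAt (fun x : ℝ => (1 - x) ^ (1-p)) ((1-p) * (1-x) ^ (1-p-1) * (-1)) x := by
    have h3 : HasDerivAt (fun y : ℝ => y ^ (1-p)) ((1-p) * (1-x) ^ (1-p-1)) (1-x) :=
      Real.hasDerivAt_rpow_const (Or.inl hx1.ne')
    have h4 : HasDerivAt (fun x : ℝ => 1 - x) (-1) x := by
      simpa using (hasDerivAt_id x).const_sub 1
    exact h3.comp x h4
  have := h1.mul h2
  refine this.congr_deriv (Eq.symm ?_)
  have e1 : x ^ p = x ^ (p-1) * x := by
    rw [← Real.rpow_add_one hx0.ne']; ring_nf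
  have e2 : (1-x) ^ (1-p) = (1-x) ^ (-p) * (1-x) := by
    rw [← Real.rpow_add_one hx1.ne']; ring_nf
  have e3 : (1-x) ^ (1-p-1) = (1-x) ^ (-p) := by norm_num
  rw [e3, e1, e2]; ring

lemma phi_pos {p : ℝ} (hp : p ∈ Set.Ioo (0:ℝ) 1) {x : ℝ} (hx : x ∈ Ioo (0:ℝ) 1) :
    0 < phiF p x :=
  mul_pos (Real.rpow_pos_of_pos hx.1 _) (Real.rpow_pos_of_pos (by linarith [hx.2]) _)

lemma phi_zero {p : ℝ} (hp : p ∈ Set.Ioo (0:ℝ) 1) : phiF p 0 = 0 := by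
  simp [phiF, Real.zero_rpow hp.1.ne']

lemma phi_one {p : ℝ} (hp : p ∈ Set.Ioo (0:ℝ) 1) : phiF p 1 = 0 := by
  simp [phiF, Real.zero_rpow (by linarith [hp.2] : 1 - p ≠ 0)]

lemma phi_mono {p : ℝ} (hp : p ∈ Set.Ioo (0:ℝ) 1) : StrictMonoOn (phiF p) (Icc 0 p) := by
  apply strictMonoOn_of_deriv_pos (convex_Icc 0 p)
  · exact (phi_cont hp).mono (Icc_subset_Icc le_rfl hp.2.le)
  · intro x hx
    rw [interior_Icc] at hx
    have hx' : x ∈ Ioo (0:ℝ) 1 := ⟨hx.1, hx.2.trans hp.2⟩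
    rw [(phi_hasDeriv hp hx').deriv]
    have := Real.rpow_pos_of_pos hx'.1 (p-1)
    have := Real.rpow_pos_of_pos (by linarith [hx'.2] : (0:ℝ) < 1 - x) (-p)
    have : 0 < p - x := by linarith [hx.2]
    positivity

lemma phi_anti {p : ℝ} (hp : p ∈ Set.Ioo (0:ℝ) 1) : StrictAntiOn (phiF p) (Icc p 1) := by
  apply strictAntiOn_of_deriv_neg (convex_Icc p 1)
  · exact (phi_cont hp).mono (Icc_subset_Icc hp.1.le le_rfl)
  · intro x hx
    rw [interior_Icc] at hx
    have hx' : x ∈ Ioo (0:ℝ) 1 := ⟨hp.1.trans hx.1, hx.2⟩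
    rw [(phi_hasDeriv hp hx').deriv]
    have h1 := Real.rpow_pos_of_pos hx'.1 (p-1)
    have h2 := Real.rpow_pos_of_pos (by linarith [hx'.2] : (0:ℝ) < 1 - x) (-p)
    have h3 : p - x < 0 := by linarith [hx.1]
    have := mul_pos h1 h2
    nlinarith

/-- The log of phi. -/
noncomputable def flog (p : ℝ) : ℝ → ℝ := fun x => p * Real.log x + (1-p) * Real.log (1-x)

lemma phi_eq_exp_flog {p : ℝ} {x : ℝ} (hx : x ∈ Ioo (0:ℝ) 1) :
    phiF p x = Real.exp (flog p x) := by
  have hx1 : (0:ℝ) < 1 - x := by linarith [hx.2]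
  rw [phiF, flog, Real.exp_add, Real.rpow_def_of_pos hx.1, Real.rpow_def_of_pos hx1]
  ring_nf

lemma flog_hasDeriv {p : ℝ} {x : ℝ} (hx : x ∈ Ioo (0:ℝ) 1) :
    HasDerivAt (flog p) (p / x - (1-p) / (1-x)) x := by
  have hx1 : (0:ℝ) < 1 - x := by linarith [hx.2]
  have h1 : HasDerivAt (fun x : ℝ => p * Real.log x) (p * x⁻¹) x :=
    (Real.hasDerivAt_log hx.1.ne').const_mul p
  have h2 : HasDerivAt (fun x : ℝ => (1-p) * Real.log (1-x)) ((1-p) * ((1-x)⁻¹ * (-1))) x := by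
    have h3 : HasDerivAt (fun x : ℝ => 1 - x) (-1) x := by
      simpa using (hasDerivAt_id x).const_sub 1
    exact ((Real.hasDerivAt_log hx1.ne').comp x h3).const_mul (1-p)
  refine (h1.add h2).congr_deriv (Eq.symm ?_)
  field_simp
  ring

/-- Claim C : for p ≤ 1/2 and x ∈ (0,p), phi x ≤ phi (2p - x). -/
lemma claimC {p : ℝ} (hp : p ∈ Set.Ioo (0:ℝ) 1) (hp2 : p ≤ 1/2) {x : ℝ}
    (hx : x ∈ Ioo (0:ℝ) p) : phiF p x ≤ phiF p (2*p - x) := by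
  have hx1 : (0:ℝ) < x := hx.1
  have hxp : x < p := hx.2
  have hmem : ∀ t ∈ Icc x p, t ∈ Ioo (0:ℝ) 1 :=
    fun t ht => ⟨lt_of_lt_of_le hx1 ht.1, lt_of_le_of_lt ht.2 (by linarith [hp.2])⟩
  have hmem' : ∀ t ∈ Icc x p, 2*p - t ∈ Ioo (0:ℝ) 1 :=
    fun t ht => ⟨by nlinarith [ht.2, hp.1], by nlinarith [ht.1]⟩
  -- G t = flog (2p - t) - flog t is antitone on [x, p]
  have hG : AntitoneOn (fun t => flog p (2*p - t) - flog p t) (Icc x p) := by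
    apply antitoneOn_of_deriv_nonpos (convex_Icc x p)
    · apply ContinuousOn.sub
      · intro t ht
        have := ((flog_hasDeriv (p := p) (hmem' t ht)).comp t
          (by simpa using (hasDerivAt_id t).const_sub (2*p))).continuousAt
        exact this.continuousWithinAt
      · exact fun t ht => ((flog_hasDeriv (p := p) (hmem t ht)).continuousAt).continuousWithinAt
    · intro t ht
      rw [interior_Icc] at ht
      have ht' := hmem t (Ioo_subset_Icc_self ht)
      have ht'' := hmem' t (Ioo_subset_Icc_self ht)
      apply DifferentiableAt.differentiableWithinAt
      apply DifferentiableAt.sub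
      · exact ((flog_hasDeriv (p := p) ht'').comp t
          (by simpa using (hasDerivAt_id t).const_sub (2*p) : HasDerivAt (fun t : ℝ => 2*p - t) (-1) t)).differentiableAt
      · exact (flog_hasDeriv (p := p) ht').differentiableAt
    · intro t ht
      rw [interior_Icc] at ht
      have ht' := hmem t (Ioo_subset_Icc_self ht)
      have ht'' := hmem' t (Ioo_subset_Icc_self ht)
      have hd1 : HasDerivAt (fun t : ℝ => flog p (2*p - t))
          ((p / (2*p-t) - (1-p) / (1-(2*p-t))) * (-1)) t :=
        (flog_hasDeriv (p := p) ht'').comp t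
          (by simpa using (hasDerivAt_id t).const_sub (2*p))
      have hd := hd1.sub (flog_hasDeriv (p := p) ht')
      rw [show deriv (fun t => flog p (2 * p - t) - flog p t) t = _ from hd.deriv]
      -- need: (p/(2p-t) - (1-p)/(1-2p+t)) * (-1) - (p/t - (1-p)/(1-t)) ≤ 0
      -- i.e. F'(t) + F'(2p-t) ≥ 0
      have h0t : 0 < t := ht'.1
      have ht1 : 0 < 1 - t := by linarith [ht'.2]
      have h02 : 0 < 2*p - t := ht''.1
      have h21 : 0 < 1 - (2*p - t) := by linarith [ht''.2]
      have hprod : t * (1-t) ≤ (2*p-t) * (1 - (2*p-t)) := by nlinarith [ht.2, hp2]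
      have e1 : p / t - (1-p)/(1-t) = (p - t) / (t * (1-t)) := by
        field_simp; ring
      have e2 : p / (2*p-t) - (1-p)/(1-(2*p-t)) = (t - p) / ((2*p-t) * (1-(2*p-t))) := by
        rw [div_sub_div _ _ h02.ne' h21.ne', div_eq_div_iff (mul_ne_zero h02.ne' h21.ne') (mul_ne_zero h02.ne' h21.ne')]; ring
      rw [e2, e1]
      have hle : (p - t) / ((2*p-t) * (1-(2*p-t))) ≤ (p - t) / (t * (1-t)) := by
        apply div_le_div_of_nonneg_left (by linarith [ht.2]) (by positivity) hprod
      have := div_nonneg (by linarith [ht.2] : (0:ℝ) ≤ p - t) (by positivity : (0:ℝ) ≤ t * (1-t))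
      have e3 : (t - p) / ((2*p-t) * (1-(2*p-t))) = -((p - t)/((2*p-t)*(1-(2*p-t)))) := by
        ring
      rw [e3]
      linarith [hle, this]
  have hGx := hG (left_mem_Icc.mpr hxp.le) (right_mem_Icc.mpr hxp.le) hxp.le
  simp only [show 2*p - p = p by ring, sub_self] at hGx
  -- hGx : flog p (2p - p) - flog p p ≤ flog (2p - x) - flog x  -- careful direction
  have hfl : flog p x ≤ flog p (2*p - x) := by
    have : (0:ℝ) ≤ flog p (2*p - x) - flog p x := le_trans (by simp) hGx
    linarith
  rw [phi_eq_exp_flog (hmem x (left_mem_Icc.mpr hxp.le)),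
    phi_eq_exp_flog (hmem' x (left_mem_Icc.mpr hxp.le))]
  exact Real.exp_le_exp.mpr hfl

section RLemmas

variable {p : ℝ} {r : ℝ → ℝ}

lemma heq_phi (heq : ∀ x ∈ Set.Ioo (0:ℝ) 1,
      x ^ p * (1 - x) ^ (1 - p) = r x ^ p * (1 - r x) ^ (1 - p)) :
    ∀ x ∈ Set.Ioo (0:ℝ) 1, phiF p x = phiF p (r x) := heq

lemma r_fixed (hp : p ∈ Set.Ioo (0:ℝ) 1)
    (hanti : StrictAntiOn r (Set.Icc 0 1)) (hmaps : Set.MapsTo r (Set.Icc 0 1) (Set.Icc 0 1))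
    (heq : ∀ x ∈ Set.Ioo (0:ℝ) 1, phiF p x = phiF p (r x)) :
    r p = p := by
  have hpm : p ∈ Icc (0:ℝ) 1 := ⟨hp.1.le, hp.2.le⟩
  have hrp : r p ∈ Icc (0:ℝ) 1 := hmaps hpm
  have he := heq p hp
  rcases lt_trichotomy (r p) p with h|h|h
  · have := phi_mono hp ⟨hrp.1, h.le⟩ (right_mem_Icc.mpr hp.1.le) h
    rw [← he] at this; exact absurd this (lt_irrefl _)
  · exact h
  · have := phi_anti hp (left_mem_Icc.mpr hp.2.le) ⟨h.le, hrp.2⟩ h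
    rw [← he] at this; exact absurd this (lt_irrefl _)

lemma r_mem_right (hp : p ∈ Set.Ioo (0:ℝ) 1)
    (hanti : StrictAntiOn r (Set.Icc 0 1)) (hmaps : Set.MapsTo r (Set.Icc 0 1) (Set.Icc 0 1))
    (heq : ∀ x ∈ Set.Ioo (0:ℝ) 1, phiF p x = phiF p (r x)) :
    ∀ x ∈ Ioo (0:ℝ) p, r x ∈ Ioo p 1 := by
  intro x hx
  have hx' : x ∈ Ioo (0:ℝ) 1 := ⟨hx.1, hx.2.trans hp.2⟩
  have hxm : x ∈ Icc (0:ℝ) 1 := Ioo_subset_Icc_self hx'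
  have hrp := r_fixed hp hanti hmaps heq
  have h1 : p < r x := by
    have := hanti hxm ⟨hp.1.le, hp.2.le⟩ hx.2
    rwa [hrp] at this
  have h2 : r x < 1 := by
    rcases lt_or_eq_of_le (hmaps hxm).2 with h|h
    · exact h
    · exfalso
      have := heq x hx'
      rw [h, phi_one hp] at this
      exact absurd this (ne_of_gt (phi_pos hp hx'))
  exact ⟨h1, h2⟩

lemma r_mem_left (hp : p ∈ Set.Ioo (0:ℝ) 1)
    (hanti : StrictAntiOn r (Set.Icc 0 1)) (hmaps : Set.MapsTo r (Set.Icc 0 1) (Set.Icc 0 1))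
    (heq : ∀ x ∈ Set.Ioo (0:ℝ) 1, phiF p x = phiF p (r x)) :
    ∀ x ∈ Ioo p 1, r x ∈ Ioo 0 p := by
  intro x hx
  have hx' : x ∈ Ioo (0:ℝ) 1 := ⟨hp.1.trans hx.1, hx.2⟩
  have hxm : x ∈ Icc (0:ℝ) 1 := Ioo_subset_Icc_self hx'
  have hrp := r_fixed hp hanti hmaps heq
  have h1 : r x < p := by
    have := hanti ⟨hp.1.le, hp.2.le⟩ hxm hx.1
    rwa [hrp] at this
  have h2 : 0 < r x := by
    rcases lt_or_eq_of_le (hmaps hxm).1 with h|h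
    · exact h
    · exfalso
      have := heq x hx'
      rw [← h, phi_zero hp] at this
      exact absurd this (ne_of_gt (phi_pos hp hx'))
  exact ⟨h2, h1⟩

/-- The key inequality: for p ≤ 1/2, x + r x ≥ 2p on (0,1). -/
lemma key_ineq (hp : p ∈ Set.Ioo (0:ℝ) 1) (hp2 : p ≤ 1/2)
    (hanti : StrictAntiOn r (Set.Icc 0 1)) (hmaps : Set.MapsTo r (Set.Icc 0 1) (Set.Icc 0 1))
    (heq : ∀ x ∈ Set.Ioo (0:ℝ) 1, phiF p x = phiF p (r x)) :
    ∀ x ∈ Ioo (0:ℝ) 1, 2*p ≤ x + r x := by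
  intro x hx
  rcases lt_trichotomy x p with h|h|h
  · -- x < p : r x ≥ 2p - x via claimC
    have hxp : x ∈ Ioo (0:ℝ) p := ⟨hx.1, h⟩
    have hr := r_mem_right hp hanti hmaps heq x hxp
    have hC := claimC hp hp2 hxp
    by_contra hcon
    push_neg at hcon
    have h1 : r x < 2*p - x := by linarith
    have h2 : 2*p - x ≤ 1 := by linarith [hx.1, hp2]
    have := phi_anti hp ⟨hr.1.le, hr.2.le⟩ ⟨by linarith [hxp.2], h2⟩ h1
    rw [← heq x hx] at this
    linarith [hC, this]
  · rw [h, r_fixed hp hanti hmaps heq]; linarith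
  · -- x > p : u := r x ∈ (0,p), apply claimC at u
    have hxp : x ∈ Ioo p 1 := ⟨h, hx.2⟩
    have hu := r_mem_left hp hanti hmaps heq x hxp
    have hC := claimC hp hp2 hu
    by_contra hcon
    push_neg at hcon
    have h1 : x < 2*p - r x := by linarith
    have h2 : 2*p - r x ≤ 1 := by linarith [hu.1, hp2]
    have := phi_anti hp ⟨h.le, hx.2.le⟩ ⟨by linarith [hu.2], h2⟩ h1
    rw [heq x hx] at this
    linarith [hC, this]

lemma r_zero_ge (hp : p ∈ Set.Ioo (0:ℝ) 1) (hp2 : p ≤ 1/2)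
    (hanti : StrictAntiOn r (Set.Icc 0 1)) (hmaps : Set.MapsTo r (Set.Icc 0 1) (Set.Icc 0 1))
    (heq : ∀ x ∈ Set.Ioo (0:ℝ) 1, phiF p x = phiF p (r x)) :
    2*p ≤ r 0 := by
  by_contra hcon
  push_neg at hcon
  set x := min p (2*p - r 0) / 2 with hxdef
  have hx0 : 0 < x := by
    apply div_pos _ two_pos
    apply lt_min hp.1
    linarith
  have hxp : x < p := by
    have hm : min p (2*p - r 0) ≤ p := min_le_left _ _
    rw [hxdef]; linarith [hp.1]
  have hx1 : x ∈ Ioo (0:ℝ) 1 := ⟨hx0, by linarith [hp.2]⟩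
  have hk := key_ineq hp hp2 hanti hmaps heq x hx1
  have hlt : r x < r 0 := hanti ⟨le_rfl, by norm_num⟩ (Ioo_subset_Icc_self hx1) hx0
  have hm2 : min p (2*p - r 0) ≤ 2*p - r 0 := min_le_right _ _
  rw [hxdef] at hk
  linarith

end RLemmas

noncomputable def Aq (p : ℝ) : ℝ → ℝ := fun t => (p - t) / (t * (1 - t))

lemma phi_deriv_eq {p : ℝ} (hp : p ∈ Set.Ioo (0:ℝ) 1) {t : ℝ} (ht : t ∈ Ioo (0:ℝ) 1) :
    t ^ (p-1) * (1-t) ^ (-p) * (p - t) = phiF p t * Aq p t := by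
  have ht0 : (0:ℝ) < t := ht.1
  have ht1 : (0:ℝ) < 1 - t := by linarith [ht.2]
  have e1 : t ^ (p-1) = t ^ p / t := Real.rpow_sub_one ht0.ne' p
  have e2 : (1-t) ^ (-p) = (1-t) ^ (1-p) / (1-t) := by
    rw [show -p = (1-p) - 1 by ring]
    exact Real.rpow_sub_one ht1.ne' _
  rw [e1, e2, phiF, Aq]
  field_simp

section DerivR

variable {p : ℝ} {r : ℝ → ℝ}

lemma r_hasDeriv_left (hp : p ∈ Set.Ioo (0:ℝ) 1)
    (hanti : StrictAntiOn r (Set.Icc 0 1)) (hmaps : Set.MapsTo r (Set.Icc 0 1) (Set.Icc 0 1))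
    (heq : ∀ x ∈ Set.Ioo (0:ℝ) 1, phiF p x = phiF p (r x))
    {x₀ : ℝ} (hx₀ : x₀ ∈ Ioo (0:ℝ) p) :
    HasDerivAt r (Aq p x₀ / Aq p (r x₀)) x₀ := by
  have hx₀' : x₀ ∈ Ioo (0:ℝ) 1 := ⟨hx₀.1, hx₀.2.trans hp.2⟩
  set u₀ := r x₀ with hu₀def
  have hu₀ : u₀ ∈ Ioo p 1 := r_mem_right hp hanti hmaps heq x₀ hx₀
  have hu₀' : u₀ ∈ Ioo (0:ℝ) 1 := ⟨hp.1.trans hu₀.1, hu₀.2⟩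
  set M := phiF p p with hMdef
  set c := phiF p x₀ with hcdef
  have hcu : phiF p u₀ = c := (heq x₀ hx₀').symm
  have hanti' := phi_anti hp
  have hinj := hanti'.injOn
  have hcM : c ∈ Ioo (0:ℝ) M := by
    constructor
    · exact phi_pos hp hx₀'
    · rw [← hcu]
      exact hanti' (left_mem_Icc.mpr hp.2.le) ⟨hu₀.1.le, hu₀.2.le⟩ hu₀.1
  set g := Function.invFunOn (phiF p) (Icc p 1) with hgdef
  have himg : ∀ y ∈ Ioo (0:ℝ) M, ∃ a ∈ Icc p 1, phiF p a = y := by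
    intro y hy
    have := intermediate_value_Icc' hp.2.le ((phi_cont hp).mono (Icc_subset_Icc hp.1.le le_rfl))
    rw [phi_one hp] at this
    rcases this ⟨hy.1.le, hy.2.le⟩ with ⟨a, ha, hfa⟩
    exact ⟨a, ha, hfa⟩
  have hg_inv : ∀ y ∈ Ioo (0:ℝ) M, phiF p (g y) = y :=
    fun y hy => Function.invFunOn_eq (himg y hy)
  have hg_mem : ∀ y ∈ Ioo (0:ℝ) M, g y ∈ Icc p 1 :=
    fun y hy => Function.invFunOn_mem (himg y hy)
  have hgu : ∀ u ∈ Ioo p 1, g (phiF p u) = u := by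
    intro u hu
    have huM : phiF p u ∈ Ioo (0:ℝ) M := by
      constructor
      · exact phi_pos hp ⟨hp.1.trans hu.1, hu.2⟩
      · exact hanti' (left_mem_Icc.mpr hp.2.le) ⟨hu.1.le, hu.2.le⟩ hu.1
    exact hinj (hg_mem _ huM) ⟨hu.1.le, hu.2.le⟩ (hg_inv _ huM)
  have hgc : g c = u₀ := by rw [← hcu]; exact hgu u₀ hu₀
  have hganti : StrictAntiOn g (Ioo 0 M) := by
    intro y1 hy1 y2 hy2 h12
    rcases lt_trichotomy (g y2) (g y1) with h|h|h
    · exact h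
    · exfalso
      have h' := congrArg (phiF p) h
      rw [hg_inv _ hy2, hg_inv _ hy1] at h'
      exact absurd h' (ne_of_gt h12)
    · exfalso
      have h' := hanti' (hg_mem _ hy1) (hg_mem _ hy2) h
      rw [hg_inv _ hy2, hg_inv _ hy1] at h'
      exact absurd h12 (not_lt.mpr h'.le)
  -- continuity of g at c via the negation trick
  have hgcont : ContinuousAt g c := by
    have hGmono : StrictMonoOn (fun y => g (-y)) (Ioo (-M) 0) := by
      intro y1 hy1 y2 hy2 h12
      exact hganti ⟨by linarith [hy2.2], by linarith [hy2.1]⟩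
        ⟨by linarith [hy1.2], by linarith [hy1.1]⟩ (by linarith)
    have hGc : ContinuousAt (fun y => g (-y)) (-c) := by
      apply hGmono.continuousAt_of_image_mem_nhds
      · exact isOpen_Ioo.mem_nhds ⟨by linarith [hcM.2], by linarith [hcM.1]⟩
      · have : (fun y => g (-y)) '' (Ioo (-M) 0) ⊇ Ioo p 1 := by
          intro u hu
          have huM : phiF p u ∈ Ioo (0:ℝ) M := by
            constructor
            · exact phi_pos hp ⟨hp.1.trans hu.1, hu.2⟩
            · exact hanti' (left_mem_Icc.mpr hp.2.le) ⟨hu.1.le, hu.2.le⟩ hu.1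
          exact ⟨-(phiF p u), ⟨by linarith [huM.2], by linarith [huM.1]⟩,
            by simp [hgu u hu]⟩
        apply Filter.mem_of_superset _ this
        apply isOpen_Ioo.mem_nhds
        simp only [neg_neg, hgc]
        exact hu₀
    have : ContinuousAt (fun y : ℝ => g (-(-y))) c := hGc.comp (continuousAt_neg)
    simpa using this
  -- derivative of phi at u₀
  have hdu : HasDerivAt (phiF p) (u₀ ^ (p-1) * (1-u₀) ^ (-p) * (p - u₀)) u₀ :=
    phi_hasDeriv hp hu₀'
  have hdu0 : u₀ ^ (p-1) * (1-u₀) ^ (-p) * (p - u₀) ≠ 0 := by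
    have h1 := Real.rpow_pos_of_pos hu₀'.1 (p-1)
    have h2 := Real.rpow_pos_of_pos (by linarith [hu₀'.2] : (0:ℝ) < 1 - u₀) (-p)
    have h3 : p - u₀ < 0 := by linarith [hu₀.1]
    exact ne_of_lt (by nlinarith [mul_pos h1 h2])
  have hfg : ∀ᶠ y in nhds c, phiF p (g y) = y :=
    Filter.eventually_of_mem (isOpen_Ioo.mem_nhds hcM) hg_inv
  have hgderiv : HasDerivAt g (u₀ ^ (p-1) * (1-u₀) ^ (-p) * (p - u₀))⁻¹ c := by
    apply HasDerivAt.of_local_left_inverse hgcont _ hdu0 hfg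
    rw [hgc]; exact hdu
  -- r agrees with g ∘ phi near x₀
  have hreq : r =ᶠ[nhds x₀] (g ∘ phiF p) := by
    apply Filter.eventuallyEq_of_mem (isOpen_Ioo.mem_nhds hx₀)
    intro y hy
    have hy' : y ∈ Ioo (0:ℝ) 1 := ⟨hy.1, hy.2.trans hp.2⟩
    have hr := r_mem_right hp hanti hmaps heq y hy
    have : g (phiF p y) = r y := by
      rw [heq y hy']
      exact hgu (r y) hr
    simp [Function.comp, this]
  have hcomp : HasDerivAt (g ∘ phiF p)
      ((u₀ ^ (p-1) * (1-u₀) ^ (-p) * (p - u₀))⁻¹ * (x₀ ^ (p-1) * (1-x₀) ^ (-p) * (p - x₀))) x₀ := by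
    apply HasDerivAt.comp
    · rw [← hcdef] at *; rw [hcdef] at hgderiv ⊢; exact hgderiv
    · exact phi_hasDeriv hp hx₀'
  have hfinal := (hreq.hasDerivAt_iff.mpr hcomp)
  refine hfinal.congr_deriv (Eq.symm ?_)
  rw [phi_deriv_eq hp hx₀', phi_deriv_eq hp hu₀']
  have hU : Aq p u₀ ≠ 0 := by
    rw [Aq]
    have : p - u₀ < 0 := by linarith [hu₀.1]
    have h1 : (0:ℝ) < u₀ * (1 - u₀) := by nlinarith [hu₀'.1, hu₀'.2]
    exact div_ne_zero (by linarith) (by positivity)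
  have hphiu : phiF p u₀ ≠ 0 := ne_of_gt (phi_pos hp hu₀')
  have hc0 : c ≠ 0 := hcu ▸ hphiu
  rw [hcu, ← hcdef]
  field_simp

end DerivR

section DerivR2

variable {p : ℝ} {r : ℝ → ℝ}

lemma r_hasDeriv_right (hp : p ∈ Set.Ioo (0:ℝ) 1)
    (hanti : StrictAntiOn r (Set.Icc 0 1)) (hmaps : Set.MapsTo r (Set.Icc 0 1) (Set.Icc 0 1))
    (heq : ∀ x ∈ Set.Ioo (0:ℝ) 1, phiF p x = phiF p (r x))
    {x₀ : ℝ} (hx₀ : x₀ ∈ Ioo p 1) :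
    HasDerivAt r (Aq p x₀ / Aq p (r x₀)) x₀ := by
  have hx₀' : x₀ ∈ Ioo (0:ℝ) 1 := ⟨hp.1.trans hx₀.1, hx₀.2⟩
  set u₀ := r x₀ with hu₀def
  have hu₀ : u₀ ∈ Ioo (0:ℝ) p := r_mem_left hp hanti hmaps heq x₀ hx₀
  have hu₀' : u₀ ∈ Ioo (0:ℝ) 1 := ⟨hu₀.1, hu₀.2.trans hp.2⟩
  set M := phiF p p with hMdef
  set c := phiF p x₀ with hcdef
  have hcu : phiF p u₀ = c := (heq x₀ hx₀').symm
  have hmono' := phi_mono hp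
  have hinj := hmono'.injOn
  have hcM : c ∈ Ioo (0:ℝ) M := by
    constructor
    · exact phi_pos hp hx₀'
    · rw [← hcu]
      exact hmono' ⟨hu₀.1.le, hu₀.2.le⟩ (right_mem_Icc.mpr hp.1.le) hu₀.2
  set g := Function.invFunOn (phiF p) (Icc 0 p) with hgdef
  have himg : ∀ y ∈ Ioo (0:ℝ) M, ∃ a ∈ Icc 0 p, phiF p a = y := by
    intro y hy
    have := intermediate_value_Icc hp.1.le ((phi_cont hp).mono (Icc_subset_Icc le_rfl hp.2.le))
    rw [phi_zero hp] at this
    rcases this ⟨hy.1.le, hy.2.le⟩ with ⟨a, ha, hfa⟩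
    exact ⟨a, ha, hfa⟩
  have hg_inv : ∀ y ∈ Ioo (0:ℝ) M, phiF p (g y) = y :=
    fun y hy => Function.invFunOn_eq (himg y hy)
  have hg_mem : ∀ y ∈ Ioo (0:ℝ) M, g y ∈ Icc 0 p :=
    fun y hy => Function.invFunOn_mem (himg y hy)
  have hgu : ∀ u ∈ Ioo (0:ℝ) p, g (phiF p u) = u := by
    intro u hu
    have huM : phiF p u ∈ Ioo (0:ℝ) M := by
      constructor
      · exact phi_pos hp ⟨hu.1, hu.2.trans hp.2⟩
      · exact hmono' ⟨hu.1.le, hu.2.le⟩ (right_mem_Icc.mpr hp.1.le) hu.2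
    exact hinj (hg_mem _ huM) ⟨hu.1.le, hu.2.le⟩ (hg_inv _ huM)
  have hgc : g c = u₀ := by rw [← hcu]; exact hgu u₀ hu₀
  have hgmono : StrictMonoOn g (Ioo 0 M) := by
    intro y1 hy1 y2 hy2 h12
    rcases lt_trichotomy (g y1) (g y2) with h|h|h
    · exact h
    · exfalso
      have h' := congrArg (phiF p) h
      rw [hg_inv _ hy2, hg_inv _ hy1] at h'
      exact absurd h' (ne_of_lt h12)
    · exfalso
      have h' := hmono' (hg_mem _ hy2) (hg_mem _ hy1) h
      rw [hg_inv _ hy2, hg_inv _ hy1] at h'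
      exact absurd h12 (not_lt.mpr h'.le)
  have hgcont : ContinuousAt g c := by
    apply hgmono.continuousAt_of_image_mem_nhds (isOpen_Ioo.mem_nhds hcM)
    have hsub : g '' (Ioo 0 M) ⊇ Ioo (0:ℝ) p := by
      intro u hu
      have huM : phiF p u ∈ Ioo (0:ℝ) M := by
        constructor
        · exact phi_pos hp ⟨hu.1, hu.2.trans hp.2⟩
        · exact hmono' ⟨hu.1.le, hu.2.le⟩ (right_mem_Icc.mpr hp.1.le) hu.2
      exact ⟨phiF p u, huM, hgu u hu⟩
    apply Filter.mem_of_superset _ hsub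
    apply isOpen_Ioo.mem_nhds
    rw [hgc]
    exact hu₀
  have hdu : HasDerivAt (phiF p) (u₀ ^ (p-1) * (1-u₀) ^ (-p) * (p - u₀)) u₀ :=
    phi_hasDeriv hp hu₀'
  have hdu0 : u₀ ^ (p-1) * (1-u₀) ^ (-p) * (p - u₀) ≠ 0 := by
    have h1 := Real.rpow_pos_of_pos hu₀'.1 (p-1)
    have h2 := Real.rpow_pos_of_pos (by linarith [hu₀'.2] : (0:ℝ) < 1 - u₀) (-p)
    have h3 : 0 < p - u₀ := by linarith [hu₀.2]
    exact ne_of_gt (by positivity)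
  have hfg : ∀ᶠ y in nhds c, phiF p (g y) = y :=
    Filter.eventually_of_mem (isOpen_Ioo.mem_nhds hcM) hg_inv
  have hgderiv : HasDerivAt g (u₀ ^ (p-1) * (1-u₀) ^ (-p) * (p - u₀))⁻¹ c := by
    apply HasDerivAt.of_local_left_inverse hgcont _ hdu0 hfg
    rw [hgc]; exact hdu
  have hreq : r =ᶠ[nhds x₀] (g ∘ phiF p) := by
    apply Filter.eventuallyEq_of_mem (isOpen_Ioo.mem_nhds hx₀)
    intro y hy
    have hy' : y ∈ Ioo (0:ℝ) 1 := ⟨hp.1.trans hy.1, hy.2⟩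
    have hr := r_mem_left hp hanti hmaps heq y hy
    have : g (phiF p y) = r y := by
      rw [heq y hy']
      exact hgu (r y) hr
    simp [Function.comp, this]
  have hcomp : HasDerivAt (g ∘ phiF p)
      ((u₀ ^ (p-1) * (1-u₀) ^ (-p) * (p - u₀))⁻¹ * (x₀ ^ (p-1) * (1-x₀) ^ (-p) * (p - x₀))) x₀ := by
    apply HasDerivAt.comp
    · rw [← hcdef] at *; rw [hcdef] at hgderiv ⊢; exact hgderiv
    · exact phi_hasDeriv hp hx₀'
  have hfinal := (hreq.hasDerivAt_iff.mpr hcomp)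
  refine hfinal.congr_deriv (Eq.symm ?_)
  rw [phi_deriv_eq hp hx₀', phi_deriv_eq hp hu₀']
  have hU : Aq p u₀ ≠ 0 := by
    rw [Aq]
    have h3 : 0 < p - u₀ := by linarith [hu₀.2]
    have h1 : (0:ℝ) < u₀ * (1 - u₀) := by nlinarith [hu₀'.1, hu₀'.2]
    exact div_ne_zero (by linarith) (by positivity)
  have hphiu : phiF p u₀ ≠ 0 := ne_of_gt (phi_pos hp hu₀')
  have hc0 : c ≠ 0 := hcu ▸ hphiu
  rw [hcu, ← hcdef]
  field_simp

end DerivR2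

noncomputable def Bq (p : ℝ) : ℝ → ℝ := fun t => (-(t^2) + 2*p*t - p) / (t*(1-t))^2

lemma alg_id {p x u a b : ℝ} (ha : a ≠ 0) (hb : b ≠ 0) (hpu : p - u ≠ 0) :
    ((-(x^2)+2*p*x-p)/a^2 * ((p-u)/b) - (p-x)/a * (((-(u^2)+2*p*u-p)/b^2) * (((p-x)/a) / ((p-u)/b)))) / ((p-u)/b)^2
      = (p*(1-p) * ((u-p)^2 - (x-p)^2) * b) / ((u-p)^3 * a^2) := by
  have hup : u - p ≠ 0 := fun h => hpu (by linarith [sub_eq_zero.mp h])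
  field_simp
  ring

lemma Aq_hasDeriv {p t : ℝ} (ht : t ∈ Ioo (0:ℝ) 1) : HasDerivAt (Aq p) (Bq p t) t := by
  have ht0 : (0:ℝ) < t := ht.1
  have ht1 : (0:ℝ) < 1 - t := by linarith [ht.2]
  have hden : t * (1 - t) ≠ 0 := by positivity
  have h1 : HasDerivAt (fun s : ℝ => p - s) (-1) t := by
    simpa using (hasDerivAt_id t).const_sub p
  have h2 : HasDerivAt (fun s : ℝ => s * (1 - s)) (1 * (1 - t) + t * (-1)) t := by
    exact (hasDerivAt_id t).mul (by simpa using (hasDerivAt_id t).const_sub 1)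
  have := h1.div h2 hden
  refine this.congr_deriv (Eq.symm ?_)
  rw [Bq]
  field_simp
  ring

lemma Aq_pos {p t : ℝ} (ht : t ∈ Ioo (0:ℝ) 1) (htp : t < p) : 0 < Aq p t := by
  have ht1 : (0:ℝ) < 1 - t := by linarith [ht.2]
  exact div_pos (by linarith) (mul_pos ht.1 ht1)

lemma Aq_neg {p t : ℝ} (ht : t ∈ Ioo (0:ℝ) 1) (htp : p < t) : Aq p t < 0 := by
  have ht1 : (0:ℝ) < 1 - t := by linarith [ht.2]
  exact div_neg_of_neg_of_pos (by linarith) (mul_pos ht.1 ht1)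

section Pieces

variable {p : ℝ} {r : ℝ → ℝ}

lemma psi_hasDeriv (hp : p ∈ Set.Ioo (0:ℝ) 1) {x : ℝ} (hx : x ∈ Ioo (0:ℝ) 1)
    (hu : r x ∈ Ioo (0:ℝ) 1) (hup : r x ≠ p)
    (hr : HasDerivAt r (Aq p x / Aq p (r x)) x) :
    HasDerivAt (fun y => Aq p y / Aq p (r y))
      ((Bq p x * Aq p (r x) - Aq p x * (Bq p (r x) * (Aq p x / Aq p (r x)))) / (Aq p (r x))^2)
      x := by
  have hAu : Aq p (r x) ≠ 0 := by
    rcases lt_or_gt_of_ne hup with h|h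
    · exact ne_of_gt (Aq_pos hu h)
    · exact ne_of_lt (Aq_neg hu h)
  have hc1 : HasDerivAt (fun y => Aq p (r y)) (Bq p (r x) * (Aq p x / Aq p (r x))) x :=
    (Aq_hasDeriv hu).comp x hr
  exact (Aq_hasDeriv hx).div hc1 hAu

lemma deriv_psi_nonneg_left (hp : p ∈ Set.Ioo (0:ℝ) 1) {x u : ℝ}
    (hx : x ∈ Ioo (0:ℝ) p) (hu : u ∈ Ioo p 1) (hkey : 2*p ≤ x + u) :
    0 ≤ (Bq p x * Aq p u - Aq p x * (Bq p u * (Aq p x / Aq p u))) / (Aq p u)^2 := by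
  have hx' : x ∈ Ioo (0:ℝ) 1 := ⟨hx.1, hx.2.trans hp.2⟩
  have hu' : u ∈ Ioo (0:ℝ) 1 := ⟨hp.1.trans hu.1, hu.2⟩
  have ha : (0:ℝ) < x * (1-x) := by nlinarith [hx'.1, hx'.2]
  have hb : (0:ℝ) < u * (1-u) := by nlinarith [hu'.1, hu'.2]
  have hup : p - u < 0 := by linarith [hu.1]
  have hxp : 0 < p - x := by linarith [hx.2]
  have hc : (0:ℝ) < p * (1-p) := by nlinarith [hp.1, hp.2]
  have hsq : (x-p)^2 ≤ (u-p)^2 := by nlinarith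
  have hAu : Aq p u ≠ 0 := ne_of_lt (Aq_neg hu' hu.1)
  have h1 : x * (1-x) ≠ 0 := ne_of_gt ha
  have h2 : u * (1-u) ≠ 0 := ne_of_gt hb
  have h4 : p - u ≠ 0 := ne_of_lt hup
  have hEq : (Bq p x * Aq p u - Aq p x * (Bq p u * (Aq p x / Aq p u))) / (Aq p u)^2
      = (p*(1-p) * ((u-p)^2 - (x-p)^2) * (u*(1-u))) / ((u-p)^3 * (x*(1-x))^2) := by
    simp only [Aq, Bq]
    exact alg_id h1 h2 h4
  rw [hEq]
  apply div_nonneg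
  · have h6 : (0:ℝ) ≤ (u-p)^2 - (x-p)^2 := by linarith
    have := hc.le
    positivity
  · have h5 : (0:ℝ) < u - p := by linarith [hu.1]
    positivity

end Pieces

section Pieces2

variable {p : ℝ} {r : ℝ → ℝ}

lemma deriv_psi_nonneg_right (hp : p ∈ Set.Ioo (0:ℝ) 1) {x u : ℝ}
    (hx : x ∈ Ioo p 1) (hu : u ∈ Ioo (0:ℝ) p) (hkey : 2*p ≤ x + u) :
    0 ≤ (Bq p x * Aq p u - Aq p x * (Bq p u * (Aq p x / Aq p u))) / (Aq p u)^2 := by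
  have hx' : x ∈ Ioo (0:ℝ) 1 := ⟨hp.1.trans hx.1, hx.2⟩
  have hu' : u ∈ Ioo (0:ℝ) 1 := ⟨hu.1, hu.2.trans hp.2⟩
  have ha : (0:ℝ) < x * (1-x) := mul_pos hx'.1 (by linarith [hx'.2])
  have hb : (0:ℝ) < u * (1-u) := mul_pos hu'.1 (by linarith [hu'.2])
  have hc : (0:ℝ) < p * (1-p) := mul_pos hp.1 (by linarith [hp.2])
  have hsq : (u-p)^2 ≤ (x-p)^2 := by nlinarith [hu.2, hx.1]
  have h1 : x * (1-x) ≠ 0 := ne_of_gt ha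
  have h2 : u * (1-u) ≠ 0 := ne_of_gt hb
  have h4 : p - u ≠ 0 := ne_of_gt (by linarith [hu.2] : 0 < p - u)
  have hEq : (Bq p x * Aq p u - Aq p x * (Bq p u * (Aq p x / Aq p u))) / (Aq p u)^2
      = (p*(1-p) * ((u-p)^2 - (x-p)^2) * (u*(1-u))) / ((u-p)^3 * (x*(1-x))^2) := by
    simp only [Aq, Bq]
    exact alg_id h1 h2 h4
  rw [hEq]
  apply div_nonneg_of_nonpos
  · have h6 : (u-p)^2 - (x-p)^2 ≤ 0 := by linarith
    nlinarith [mul_pos hc hb]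
  · have h5 : u - p < 0 := by linarith [hu.2]
    have h7 : (u-p)^3 < 0 := by
      calc (u-p)^3 = (u-p) * (u-p)^2 := by ring
      _ < 0 := mul_neg_of_neg_of_pos h5 (by nlinarith)
    nlinarith [sq_nonneg (x*(1-x)), ha]

lemma convex_piece_left (hp : p ∈ Set.Ioo (0:ℝ) 1) (hp2 : p ≤ 1/2)
    (hcont : ContinuousOn r (Set.Icc 0 1))
    (hanti : StrictAntiOn r (Set.Icc 0 1)) (hmaps : Set.MapsTo r (Set.Icc 0 1) (Set.Icc 0 1))
    (heq : ∀ x ∈ Set.Ioo (0:ℝ) 1, phiF p x = phiF p (r x)) :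
    ConvexOn ℝ (Icc 0 p) r := by
  have hIoo : ∀ x ∈ Ioo (0:ℝ) p, x ∈ Ioo (0:ℝ) 1 := fun x hx => ⟨hx.1, hx.2.trans hp.2⟩
  -- monotonicity of psi on Ioo 0 p
  have hpsi : MonotoneOn (fun y => Aq p y / Aq p (r y)) (Ioo 0 p) := by
    apply monotoneOn_of_deriv_nonneg (convex_Ioo 0 p)
    · intro y hy
      exact ((psi_hasDeriv hp (hIoo y hy) ⟨hp.1.trans (r_mem_right hp hanti hmaps heq y hy).1,
        (r_mem_right hp hanti hmaps heq y hy).2⟩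
        (ne_of_gt (r_mem_right hp hanti hmaps heq y hy).1)
        (r_hasDeriv_left hp hanti hmaps heq hy)).continuousAt).continuousWithinAt
    · rw [interior_Ioo]
      intro y hy
      exact ((psi_hasDeriv hp (hIoo y hy) ⟨hp.1.trans (r_mem_right hp hanti hmaps heq y hy).1,
        (r_mem_right hp hanti hmaps heq y hy).2⟩
        (ne_of_gt (r_mem_right hp hanti hmaps heq y hy).1)
        (r_hasDeriv_left hp hanti hmaps heq hy)).differentiableAt).differentiableWithinAt
    · rw [interior_Ioo]
      intro y hy
      have hry := r_mem_right hp hanti hmaps heq y hy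
      have hd := psi_hasDeriv hp (hIoo y hy) ⟨hp.1.trans hry.1, hry.2⟩ (ne_of_gt hry.1)
        (r_hasDeriv_left hp hanti hmaps heq hy)
      rw [hd.deriv]
      exact deriv_psi_nonneg_left hp hy hry
        (key_ineq hp hp2 hanti hmaps heq y (hIoo y hy))
  apply MonotoneOn.convexOn_of_deriv (convex_Icc 0 p)
    (hcont.mono (Icc_subset_Icc le_rfl hp.2.le))
  · rw [interior_Icc]
    intro y hy
    exact (r_hasDeriv_left hp hanti hmaps heq hy).differentiableAt.differentiableWithinAt
  · rw [interior_Icc]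
    intro y hy z hz hyz
    rw [(r_hasDeriv_left hp hanti hmaps heq hy).deriv,
      (r_hasDeriv_left hp hanti hmaps heq hz).deriv]
    exact hpsi hy hz hyz

lemma convex_piece_right (hp : p ∈ Set.Ioo (0:ℝ) 1) (hp2 : p ≤ 1/2)
    (hcont : ContinuousOn r (Set.Icc 0 1))
    (hanti : StrictAntiOn r (Set.Icc 0 1)) (hmaps : Set.MapsTo r (Set.Icc 0 1) (Set.Icc 0 1))
    (heq : ∀ x ∈ Set.Ioo (0:ℝ) 1, phiF p x = phiF p (r x)) :
    ConvexOn ℝ (Icc p 1) r := by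
  have hIoo : ∀ x ∈ Ioo p 1, x ∈ Ioo (0:ℝ) 1 := fun x hx => ⟨hp.1.trans hx.1, hx.2⟩
  have hpsi : MonotoneOn (fun y => Aq p y / Aq p (r y)) (Ioo p 1) := by
    apply monotoneOn_of_deriv_nonneg (convex_Ioo p 1)
    · intro y hy
      exact ((psi_hasDeriv hp (hIoo y hy) ⟨(r_mem_left hp hanti hmaps heq y hy).1,
        (r_mem_left hp hanti hmaps heq y hy).2.trans hp.2⟩
        (ne_of_lt (r_mem_left hp hanti hmaps heq y hy).2)
        (r_hasDeriv_right hp hanti hmaps heq hy)).continuousAt).continuousWithinAt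
    · rw [interior_Ioo]
      intro y hy
      exact ((psi_hasDeriv hp (hIoo y hy) ⟨(r_mem_left hp hanti hmaps heq y hy).1,
        (r_mem_left hp hanti hmaps heq y hy).2.trans hp.2⟩
        (ne_of_lt (r_mem_left hp hanti hmaps heq y hy).2)
        (r_hasDeriv_right hp hanti hmaps heq hy)).differentiableAt).differentiableWithinAt
    · rw [interior_Ioo]
      intro y hy
      have hry := r_mem_left hp hanti hmaps heq y hy
      have hd := psi_hasDeriv hp (hIoo y hy) ⟨hry.1, hry.2.trans hp.2⟩ (ne_of_lt hry.2)
        (r_hasDeriv_right hp hanti hmaps heq hy)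
      rw [hd.deriv]
      exact deriv_psi_nonneg_right hp hy hry
        (key_ineq hp hp2 hanti hmaps heq y (hIoo y hy))
  apply MonotoneOn.convexOn_of_deriv (convex_Icc p 1)
    (hcont.mono (Icc_subset_Icc hp.1.le le_rfl))
  · rw [interior_Icc]
    intro y hy
    exact (r_hasDeriv_right hp hanti hmaps heq hy).differentiableAt.differentiableWithinAt
  · rw [interior_Icc]
    intro y hy z hz hyz
    rw [(r_hasDeriv_right hp hanti hmaps heq hy).deriv,
      (r_hasDeriv_right hp hanti hmaps heq hz).deriv]
    exact hpsi hy hz hyz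

end Pieces2

lemma convexOn_glue {f : ℝ → ℝ} {a b c : ℝ} (hab : a ≤ b) (hbc : b ≤ c)
    (h1 : ConvexOn ℝ (Icc a b) f) (h2 : ConvexOn ℝ (Icc b c) f)
    (hsl : ∀ x ∈ Ico a b, ∀ z ∈ Ioc b c,
      (f b - f x) / (b - x) ≤ (f z - f b) / (z - b)) :
    ConvexOn ℝ (Icc a c) f := by
  apply convexOn_of_slope_mono_adjacent (convex_Icc a c)
  intro x y z hx hz hxy hyz
  rcases le_or_gt z b with hzb | hbz
  · exact h1.slope_mono_adjacent ⟨hx.1, ((hxy.trans hyz).le).trans hzb⟩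
      ⟨le_trans hx.1 (hxy.trans hyz).le, hzb⟩ hxy hyz
  rcases le_or_gt b x with hbx | hxb
  · exact h2.slope_mono_adjacent ⟨hbx, hx.2⟩ ⟨hbx.trans (hxy.trans hyz).le, hz.2⟩ hxy hyz
  -- x < b < z
  rcases lt_trichotomy y b with hyb | hyb | hyb
  · -- x < y < b < z
    have hay : a ≤ y := hx.1.trans hxy.le
    have A : (f y - f x) / (y - x) ≤ (f b - f y) / (b - y) :=
      h1.slope_mono_adjacent ⟨hx.1, hxb.le⟩ (right_mem_Icc.mpr hab) hxy hyb
    have B : (f b - f y) / (b - y) ≤ (f z - f b) / (z - b) :=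
      hsl y ⟨hay, hyb⟩ z ⟨hbz, hz.2⟩
    have hby : (0:ℝ) < b - y := by linarith
    have hzb' : (0:ℝ) < z - b := by linarith
    have hzy : (0:ℝ) < z - y := by linarith
    set s2 := (f b - f y) / (b - y) with hs2def
    have e1 : f b - f y = s2 * (b - y) := by rw [hs2def]; field_simp
    have hs3 : s2 * (z - b) ≤ f z - f b := by
      have e2 : f z - f b = (f z - f b) / (z - b) * (z - b) := by field_simp
      rw [e2]
      exact mul_le_mul_of_nonneg_right B hzb'.le
    have hring : s2 * (b - y) + s2 * (z - b) = s2 * (z - y) := by ring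
    have hfz : s2 * (z - y) ≤ f z - f y := by linarith
    have hA2 : (f y - f x) / (y - x) ≤ s2 := A
    have : s2 ≤ (f z - f y) / (z - y) := (le_div_iff₀ hzy).mpr hfz
    linarith
  · -- y = b
    subst hyb
    exact hsl x ⟨hx.1, hxb⟩ z ⟨hbz, hz.2⟩
  · -- x < b < y < z
    have hyc : y ≤ c := hyz.le.trans hz.2
    have A : (f y - f b) / (y - b) ≤ (f z - f y) / (z - y) :=
      h2.slope_mono_adjacent (left_mem_Icc.mpr hbc) ⟨hbz.le, hz.2⟩ hyb hyz
    have B : (f b - f x) / (b - x) ≤ (f y - f b) / (y - b) :=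
      hsl x ⟨hx.1, hxb⟩ y ⟨hyb, hyc⟩
    have hbx' : (0:ℝ) < b - x := by linarith
    have hyb' : (0:ℝ) < y - b := by linarith
    have hyx : (0:ℝ) < y - x := by linarith
    set s2 := (f y - f b) / (y - b) with hs2def
    have e1 : f y - f b = s2 * (y - b) := by rw [hs2def]; field_simp
    have hs3 : f b - f x ≤ s2 * (b - x) := by
      have e2 : f b - f x = (f b - f x) / (b - x) * (b - x) := by field_simp
      rw [e2]
      exact mul_le_mul_of_nonneg_right B hbx'.le
    have hring : s2 * (b - x) + s2 * (y - b) = s2 * (y - x) := by ring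
    have hfy : f y - f x ≤ s2 * (y - x) := by linarith
    have : (f y - f x) / (y - x) ≤ s2 := (div_le_iff₀ hyx).mpr hfy
    linarith

lemma main_convex {p : ℝ} {r : ℝ → ℝ} (hp : p ∈ Set.Ioo (0:ℝ) 1) (hp2 : p ≤ 1/2)
    (hcont : ContinuousOn r (Set.Icc 0 1))
    (hanti : StrictAntiOn r (Set.Icc 0 1)) (hmaps : Set.MapsTo r (Set.Icc 0 1) (Set.Icc 0 1))
    (heq : ∀ x ∈ Set.Ioo (0:ℝ) 1, phiF p x = phiF p (r x)) :
    ConvexOn ℝ (Icc 0 1) r := by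
  apply convexOn_glue hp.1.le hp.2.le
    (convex_piece_left hp hp2 hcont hanti hmaps heq)
    (convex_piece_right hp hp2 hcont hanti hmaps heq)
  intro x hx z hz
  have hrp : r p = p := r_fixed hp hanti hmaps heq
  have h1 : 2*p ≤ x + r x := by
    rcases eq_or_lt_of_le hx.1 with h | h
    · have := r_zero_ge hp hp2 hanti hmaps heq
      rw [← h]
      linarith
    · exact key_ineq hp hp2 hanti hmaps heq x ⟨h, hx.2.trans hp.2⟩
  have h2 : 2*p ≤ z + r z := by
    rcases eq_or_lt_of_le hz.2 with h | h
    · have h0 : (0:ℝ) ≤ r z := (hmaps ⟨(hp.1.trans hz.1).le, hz.2⟩).1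
      rw [h] at h0 ⊢
      linarith
    · exact key_ineq hp hp2 hanti hmaps heq z ⟨hp.1.trans hz.1, h⟩
  have hpx : (0:ℝ) < p - x := by linarith [hx.2]
  have hzp : (0:ℝ) < z - p := by linarith [hz.1]
  rw [hrp]
  have hL : (p - r x) / (p - x) ≤ -1 := by
    rw [div_le_iff₀ hpx]
    linarith
  have hR : (-1 : ℝ) ≤ (r z - p) / (z - p) := by
    rw [le_div_iff₀ hzp]
    linarith
  linarith

/-- Let `p ∈ (0,1)` and let `r_p : [0,1] → [0,1]` be the (unique) continuous strictly
decreasing function with `x^p (1-x)^{1-p} = r_p(x)^p (1-r_p(x))^{1-p}` on `(0,1)`.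
If `p ≤ 1/2` then `r_p` is convex on `[0,1]`, and if `p ≥ 1/2` then `r_p` is concave
on `[0,1]`. -/
theorem stmt18 (p : ℝ) (hp : p ∈ Set.Ioo (0 : ℝ) 1) (r : ℝ → ℝ)
    (hcont : ContinuousOn r (Set.Icc 0 1)) (hanti : StrictAntiOn r (Set.Icc 0 1))
    (hmaps : Set.MapsTo r (Set.Icc 0 1) (Set.Icc 0 1))
    (heq : ∀ x ∈ Set.Ioo (0 : ℝ) 1,
      x ^ p * (1 - x) ^ (1 - p) = r x ^ p * (1 - r x) ^ (1 - p)) :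
    (p ≤ 1 / 2 → ConvexOn ℝ (Set.Icc 0 1) r) ∧
    (1 / 2 ≤ p → ConcaveOn ℝ (Set.Icc 0 1) r) := by
  have heq' : ∀ x ∈ Set.Ioo (0:ℝ) 1, phiF p x = phiF p (r x) := heq
  constructor
  · intro hp2
    exact main_convex hp hp2 hcont hanti hmaps heq'
  · intro hp2
    -- reflect
    set q := 1 - p with hqdef
    set s : ℝ → ℝ := fun y => 1 - r (1 - y) with hsdef
    have hq : q ∈ Set.Ioo (0:ℝ) 1 := ⟨by linarith [hp.2], by linarith [hp.1]⟩
    have hq2 : q ≤ 1/2 := by rw [hqdef]; linarith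
    have hmem : ∀ y ∈ Icc (0:ℝ) 1, (1:ℝ) - y ∈ Icc (0:ℝ) 1 :=
      fun y hy => ⟨by linarith [hy.2], by linarith [hy.1]⟩
    have hconts : ContinuousOn s (Icc 0 1) := by
      apply ContinuousOn.sub continuousOn_const
      exact hcont.comp ((continuous_const.sub continuous_id).continuousOn) hmem
    have hantis : StrictAntiOn s (Icc 0 1) := by
      intro y1 hy1 y2 hy2 h12
      have := hanti (hmem y2 hy2) (hmem y1 hy1) (by linarith)
      simp only [hsdef]
      linarith
    have hmapss : Set.MapsTo s (Icc 0 1) (Icc 0 1) := by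
      intro y hy
      have := hmaps (hmem y hy)
      exact ⟨by simp only [hsdef]; linarith [this.2], by simp only [hsdef]; linarith [this.1]⟩
    have heqs : ∀ x ∈ Set.Ioo (0:ℝ) 1, phiF q x = phiF q (s x) := by
      intro x hx
      have hx' : (1:ℝ) - x ∈ Set.Ioo (0:ℝ) 1 := ⟨by linarith [hx.2], by linarith [hx.1]⟩
      have h := heq' (1-x) hx'
      simp only [phiF, hsdef] at h ⊢
      rw [show (1:ℝ) - (1-x) = x by ring] at h
      rw [show (1:ℝ) - q = p by rw [hqdef]; ring,
        show (1:ℝ) - (1 - r (1-x)) = r (1-x) by ring]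
      rw [hqdef]
      linarith [h]
    have hs_convex : ConvexOn ℝ (Icc 0 1) s := main_convex hq hq2 hconts hantis hmapss heqs
    refine ⟨convex_Icc 0 1, ?_⟩
    intro x hx y hy a b ha hb hab
    have h2 := hs_convex.2 (hmem x hx) (hmem y hy) ha hb hab
    simp only [smul_eq_mul] at h2 ⊢
    have e : a * (1 - x) + b * (1 - y) = 1 - (a * x + b * y) := by linear_combination hab
    rw [e] at h2
    simp only [hsdef] at h2
    rw [show (1:ℝ) - (1 - (a*x+b*y)) = a*x+b*y by ring, show (1:ℝ) - (1-x) = x by ring,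
      show (1:ℝ) - (1-y) = y by ring] at h2
    linarith
end

section
/- Let p ∈ (0,1), let r_p : [0,1] → [0,1] be the unique continuous decreasing function satisfying x^p (1−x)^{1−p} = r_p(x)^p (1−r_p(x))^{1−p} for x ∈ (0,1), and let g(x) = c·x^a·(1−x)^b on (0,1) with a, b ∈ ℝ and c > 0. Then the function h(x) = g(r_p(x))/g(x) on (0,1) satisfies: (1) h is non-increasing if a ≥ 0 ≥ b; (2) h is non-decreasing if a ≤ 0 ≤ b; (3) if a + b ≠ 0 and (a+b)·(a/(a+b) − p) > 0 then h is strictly decreasing; (4) if a + b ≠ 0 and (a+b)·(a/(a+b) − p) < 0 then h is strictly increasing. -/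
/-- Let `p ∈ (0,1)`, let `r_p : [0,1] → [0,1]` be the (unique) continuous strictly
decreasing function with `x^p (1-x)^{1-p} = r_p(x)^p (1-r_p(x))^{1-p}` on `(0,1)`,
and let `g(x) = c·x^a·(1-x)^b` with `c > 0`. Then `h(x) = g(r_p(x))/g(x)` on `(0,1)`
is: (1) non-increasing if `a ≥ 0 ≥ b`; (2) non-decreasing if `a ≤ 0 ≤ b`;
(3) strictly decreasing if `a + b ≠ 0` and `(a+b)(a/(a+b) - p) > 0`;
(4) strictly increasing if `a + b ≠ 0` and `(a+b)(a/(a+b) - p) < 0`. -/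
theorem stmt19 (p : ℝ) (hp : p ∈ Set.Ioo (0 : ℝ) 1) (r : ℝ → ℝ)
    (hcont : ContinuousOn r (Set.Icc 0 1)) (hanti : StrictAntiOn r (Set.Icc 0 1))
    (hmaps : Set.MapsTo r (Set.Icc 0 1) (Set.Icc 0 1))
    (heq : ∀ x ∈ Set.Ioo (0 : ℝ) 1,
      x ^ p * (1 - x) ^ (1 - p) = r x ^ p * (1 - r x) ^ (1 - p))
    (a b c : ℝ) (hc : 0 < c) :
    (a ≥ 0 ∧ 0 ≥ b → AntitoneOn
      (fun x => (c * r x ^ a * (1 - r x) ^ b) / (c * x ^ a * (1 - x) ^ b))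
      (Set.Ioo 0 1)) ∧
    (a ≤ 0 ∧ 0 ≤ b → MonotoneOn
      (fun x => (c * r x ^ a * (1 - r x) ^ b) / (c * x ^ a * (1 - x) ^ b))
      (Set.Ioo 0 1)) ∧
    (a + b ≠ 0 → (a + b) * (a / (a + b) - p) > 0 → StrictAntiOn
      (fun x => (c * r x ^ a * (1 - r x) ^ b) / (c * x ^ a * (1 - x) ^ b))
      (Set.Ioo 0 1)) ∧
    (a + b ≠ 0 → (a + b) * (a / (a + b) - p) < 0 → StrictMonoOn
      (fun x => (c * r x ^ a * (1 - r x) ^ b) / (c * x ^ a * (1 - x) ^ b))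
      (Set.Ioo 0 1)) := by

  obtain ⟨hp0, hp1⟩ := hp
  -- r maps (0,1) into (0,1)
  have hr : ∀ x ∈ Set.Ioo (0:ℝ) 1, r x ∈ Set.Ioo (0:ℝ) 1 := by
    intro x hx
    have hx' : x ∈ Set.Icc (0:ℝ) 1 := Set.Ioo_subset_Icc_self hx
    have h1 := hmaps hx'
    have hpos : 0 < x ^ p * (1 - x) ^ (1 - p) :=
      mul_pos (Real.rpow_pos_of_pos hx.1 p)
        (Real.rpow_pos_of_pos (by linarith [hx.2]) _)
    have he := heq x hx
    constructor
    · rcases lt_or_eq_of_le h1.1 with h | h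
      · exact h
      · exfalso
        rw [← h, Real.zero_rpow (ne_of_gt hp0), zero_mul] at he
        linarith [hpos, he]
    · rcases lt_or_eq_of_le h1.2 with h | h
      · exact h
      · exfalso
        rw [h, sub_self, Real.zero_rpow (by linarith : (1:ℝ) - p ≠ 0), mul_zero] at he
        linarith [hpos, he]
  set q : ℝ := a - p * (a + b) with hqdef
  -- key identity
  have key : ∀ x ∈ Set.Ioo (0:ℝ) 1,
      (c * r x ^ a * (1 - r x) ^ b) / (c * x ^ a * (1 - x) ^ b)
        = ((r x * (1 - x)) / ((1 - r x) * x)) ^ q := by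
    intro x hx
    have hx0 : (0:ℝ) < x := hx.1
    have hx1 : (0:ℝ) < 1 - x := by linarith [hx.2]
    obtain ⟨hr0, hr1'⟩ := hr x hx
    have hr1 : (0:ℝ) < 1 - r x := by linarith
    have hlog : p * Real.log x + (1 - p) * Real.log (1 - x)
        = p * Real.log (r x) + (1 - p) * Real.log (1 - r x) := by
      have := congrArg Real.log (heq x hx)
      rwa [Real.log_mul (Real.rpow_pos_of_pos hx0 p).ne' (Real.rpow_pos_of_pos hx1 _).ne',
        Real.log_mul (Real.rpow_pos_of_pos hr0 p).ne' (Real.rpow_pos_of_pos hr1 _).ne',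
        Real.log_rpow hx0, Real.log_rpow hx1, Real.log_rpow hr0, Real.log_rpow hr1] at this
    have e1 : c * r x ^ a * (1 - r x) ^ b
        = Real.exp (Real.log c + Real.log (r x) * a + Real.log (1 - r x) * b) := by
      rw [Real.exp_add, Real.exp_add, Real.exp_log hc,
        ← Real.rpow_def_of_pos hr0, ← Real.rpow_def_of_pos hr1]
    have e2 : c * x ^ a * (1 - x) ^ b
        = Real.exp (Real.log c + Real.log x * a + Real.log (1 - x) * b) := by
      rw [Real.exp_add, Real.exp_add, Real.exp_log hc,
        ← Real.rpow_def_of_pos hx0, ← Real.rpow_def_of_pos hx1]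
    have e3 : ((r x * (1 - x)) / ((1 - r x) * x)) ^ q
        = Real.exp ((Real.log (r x) + Real.log (1 - x)
            - (Real.log (1 - r x) + Real.log x)) * q) := by
      rw [Real.rpow_def_of_pos (by positivity), Real.log_div (by positivity) (by positivity),
        Real.log_mul hr0.ne' hx1.ne', Real.log_mul hr1.ne' hx0.ne']
    rw [e1, e2, e3, ← Real.exp_sub]
    congr 1
    linear_combination (-(a + b)) * hlog
  -- the inner ratio is strictly decreasing
  have hrho : ∀ x ∈ Set.Ioo (0:ℝ) 1, ∀ y ∈ Set.Ioo (0:ℝ) 1, x < y →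
      (r y * (1 - y)) / ((1 - r y) * y) < (r x * (1 - x)) / ((1 - r x) * x) := by
    intro x hx y hy hxy
    obtain ⟨hrx0, hrx1⟩ := hr x hx
    obtain ⟨hry0, hry1⟩ := hr y hy
    have hrlt : r y < r x := hanti (Set.Ioo_subset_Icc_self hx) (Set.Ioo_subset_Icc_self hy) hxy
    have h1 : r y * (1 - y) < r x * (1 - x) := by nlinarith [hx.2, hy.2]
    have h2 : (1 - r x) * x < (1 - r y) * y := by nlinarith [hx.1, hy.1]
    rw [div_lt_div_iff₀ (by nlinarith [hy.1]) (by nlinarith [hx.1])]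
    exact mul_lt_mul'' h1 h2 (by nlinarith [hy.2]) (by nlinarith [hx.1])
  have hrhopos : ∀ x ∈ Set.Ioo (0:ℝ) 1, 0 < (r x * (1 - x)) / ((1 - r x) * x) := by
    intro x hx
    obtain ⟨hrx0, hrx1⟩ := hr x hx
    have hx0 : (0:ℝ) < x := hx.1
    have hx1 : (0:ℝ) < 1 - x := by linarith [hx.2]
    have hr1 : (0:ℝ) < 1 - r x := by linarith
    positivity
  refine ⟨?_, ?_, ?_, ?_⟩
  · rintro ⟨ha, hb⟩ x hx y hy hxy
    have hq : 0 ≤ q := by rw [hqdef]; nlinarith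
    rcases eq_or_lt_of_le hxy with rfl | hlt
    · exact le_refl _
    · simp only
      rw [key x hx, key y hy]
      exact Real.rpow_le_rpow (hrhopos y hy).le (hrho x hx y hy hlt).le hq
  · rintro ⟨ha, hb⟩ x hx y hy hxy
    have hq : q ≤ 0 := by rw [hqdef]; nlinarith
    rcases eq_or_lt_of_le hxy with rfl | hlt
    · exact le_refl _
    · simp only
      rw [key x hx, key y hy]
      exact Real.rpow_le_rpow_of_nonpos (hrhopos y hy) (hrho x hx y hy hlt).le hq
  · intro hab hpos x hx y hy hlt
    have hq : 0 < q := by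
      have : (a + b) * (a / (a + b) - p) = q := by rw [hqdef]; field_simp
      linarith [this ▸ hpos]
    simp only
    rw [key x hx, key y hy]
    exact Real.rpow_lt_rpow (hrhopos y hy).le (hrho x hx y hy hlt) hq
  · intro hab hneg x hx y hy hlt
    have hq : q < 0 := by
      have : (a + b) * (a / (a + b) - p) = q := by rw [hqdef]; field_simp
      linarith [this ▸ hneg]
    simp only
    rw [key x hx, key y hy]
    exact Real.rpow_lt_rpow_of_neg (hrhopos y hy) (hrho x hx y hy hlt) hq
end
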